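/- arXiv:2205.00946 — 3 statements merged into one kernel-verified Lean document; each statement's English description precedes it below -/
import Mathlib

section
/- Let p ≥ 2 be an integer, Σ a finite set with bijection Frob, and k ∈ ℤ^Σ with k_τ > 0 for all τ. Define M ⊆ Σ to be the set of τ such that there exists s ≥ 1 with k_{Frob⁻¹∘τ} = ⋯ = k_{Frob^{1−s}∘τ} = 2 and k_{Frob^{−s}∘τ} = 1. Define k' = k + Σ_{τ∈M} (p·e_{Frob⁻¹∘τ} − e_τ). Then k'_τ ≥ 2 for all τ ∈ Σ, i.e. k' is algebraic. -/
/-- The set `M`: `τ` such that for some `s ≥ 1`, `k (Frob⁻ʲ τ) = 2` for `1 ≤ j ≤ s-1`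
and `k (Frob⁻ˢ τ) = 1`. -/
def MPred {S : Type*} (Frob : Equiv.Perm S) (k : S → ℤ) (τ : S) : Prop :=
  ∃ s : ℕ, 1 ≤ s ∧ (∀ j : ℕ, 1 ≤ j → j < s → k ((⇑Frob.symm)^[j] τ) = 2) ∧
    k ((⇑Frob.symm)^[s] τ) = 1

/-- The set `M̃`. -/
def MtPred {S : Type*} (Frob : Equiv.Perm S) (k : S → ℤ) (τ : S) : Prop :=
  (3 ≤ k τ ∧ MPred Frob k τ) ∨
  (k τ = 2 ∧ k (Frob.symm τ) = 1 ∧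
    (k ((⇑Frob.symm)^[2] τ) = 1 ∨ k ((⇑Frob.symm)^[2] τ) = 2) ∧
    (k ((⇑Frob.symm)^[2] τ) = 2 → MPred Frob k ((⇑Frob.symm)^[2] τ)))

/-- The weight `k_{Ha_τ} = p·e_{Frob⁻¹∘τ} − e_τ` of the partial Hasse invariant. -/
def kHa {S : Type*} [DecidableEq S] (p : ℕ) (Frob : Equiv.Perm S) (τ : S) : S → ℤ :=
  (p : ℤ) • Pi.single (Frob.symm τ) (1 : ℤ) - Pi.single τ (1 : ℤ)

lemma mpred_frob {S : Type*} (Frob : Equiv.Perm S) (k : S → ℤ) (τ : S)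
    (h2 : k τ = 2) (h : MPred Frob k τ) : MPred Frob k (Frob τ) := by
  obtain ⟨s, hs1, hmid, hend⟩ := h
  refine ⟨s + 1, by omega, ?_, ?_⟩
  · intro j hj1 hjs
    obtain ⟨m, rfl⟩ : ∃ m, j = m + 1 := ⟨j - 1, by omega⟩
    rw [Function.iterate_succ_apply, Equiv.symm_apply_apply]
    rcases Nat.eq_zero_or_pos m with rfl | hm
    · simpa using h2
    · exact hmid m hm (by omega)
  · rw [Function.iterate_succ_apply, Equiv.symm_apply_apply]
    exact hend

/-- The weight `k' = k + ∑_{τ ∈ M} k_{Ha_τ}` is algebraic. -/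
theorem kprime_algebraic {S : Type*} [Fintype S] [DecidableEq S] (p : ℕ) (hp : 2 ≤ p)
    (Frob : Equiv.Perm S) (k : S → ℤ) (hpos : ∀ τ : S, 0 < k τ)
    (M : Finset S) (hM : ∀ τ : S, τ ∈ M ↔ MPred Frob k τ)
    (k' : S → ℤ) (hk' : k' = k + ∑ τ ∈ M, kHa p Frob τ) :
    ∀ τ : S, 2 ≤ k' τ := by
  have hp' : (2 : ℤ) ≤ (p : ℤ) := by exact_mod_cast hp
  intro τ
  have hval : k' τ = k τ + (p : ℤ) * (if Frob τ ∈ M then 1 else 0)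
      - (if τ ∈ M then 1 else 0) := by
    subst hk'
    simp only [Pi.add_apply, Finset.sum_apply, kHa, Pi.sub_apply, Pi.smul_apply,
      smul_eq_mul, Pi.single_apply, Finset.sum_sub_distrib]
    rw [Finset.sum_ite_eq M τ (fun _ => (1 : ℤ))]
    have hcongr : ∀ σ ∈ M, (p : ℤ) * (if τ = Frob.symm σ then (1:ℤ) else 0)
        = if Frob τ = σ then (p : ℤ) else 0 := by
      intro σ _
      have : (τ = Frob.symm σ) ↔ (Frob τ = σ) := by
        constructor
        · intro h; rw [h]; simp
        · intro h; rw [← h]; simp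
      rw [if_congr this rfl rfl]
      split <;> simp
    rw [Finset.sum_congr rfl hcongr, Finset.sum_ite_eq M (Frob τ) (fun _ => (p : ℤ))]
    split <;> split <;> ring
  rw [hval]
  have hk1 : k τ = 1 → Frob τ ∈ M := by
    intro h1
    rw [hM]
    exact ⟨1, le_refl 1, fun j hj1 hj2 => by omega, by simpa using h1⟩
  by_cases hτ : τ ∈ M <;> by_cases hF : Frob τ ∈ M <;>
      simp only [hτ, hF, if_true, if_false]
  · have := hpos τ; linarith
  · -- τ ∈ M, Frob τ ∉ M : need k τ ≥ 3
    have h3 : 3 ≤ k τ := by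
      by_contra hc
      have := hpos τ
      have h12 : k τ = 1 ∨ k τ = 2 := by omega
      rcases h12 with h | h
      · exact hF (hk1 h)
      · exact hF ((hM (Frob τ)).mpr (mpred_frob Frob k τ h ((hM τ).mp hτ)))
    linarith
  · have := hpos τ; linarith
  · -- neither: k τ ≥ 2
    have := hpos τ
    have : k τ ≠ 1 := fun h => hF (hk1 h)
    omega
end

section
/- Let p ≥ 2, Σ finite with bijection Frob, k ∈ ℤ^Σ with k_τ > 0 for all τ, M and 𝑀̃ as defined. Fix μ ∈ 𝑀̃ and define k^μ = k + Σ_{τ∈M∖{μ}} (p·e_{Frob⁻¹∘τ} − e_τ) + (p·e_{Frob⁻¹∘μ} + e_μ). Then k^μ_τ ≥ 2 for all τ ∈ Σ, i.e. k^μ is algebraic. -/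
/-- If `k τ = 1`, or `k τ = 2` and `τ ∈ M`, then `Frob τ ∈ M`. -/
lemma MPred_step {S : Type*} (Frob : Equiv.Perm S) (k : S → ℤ) (τ : S)
    (h1 : k τ = 1 ∨ (k τ = 2 ∧ MPred Frob k τ)) : MPred Frob k (Frob τ) := by
  rcases h1 with h | ⟨h2, s, hs1, hchain, hend⟩
  · exact ⟨1, le_refl 1, fun j hj1 hj2 => by omega, by simpa using h⟩
  · refine ⟨s + 1, by omega, ?_, ?_⟩
    · intro j hj1 hjs
      obtain ⟨j', rfl⟩ : ∃ j', j = j' + 1 := ⟨j - 1, by omega⟩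
      have hit : (⇑Frob.symm)^[j' + 1] (Frob τ) = (⇑Frob.symm)^[j'] τ := by
        simp [Function.iterate_succ_apply, Equiv.symm_apply_apply]
      rw [hit]
      rcases Nat.eq_zero_or_pos j' with h0 | h0
      · simpa [h0] using h2
      · exact hchain j' h0 (by omega)
    · have hit : (⇑Frob.symm)^[s + 1] (Frob τ) = (⇑Frob.symm)^[s] τ := by
        simp [Function.iterate_succ_apply, Equiv.symm_apply_apply]
      rw [hit, hend]

/-- For `μ ∈ M̃`, the weight `k^μ = k + ∑_{τ ∈ M ∖ {μ}} k_{Ha_τ} + (p·e_{Frob⁻¹∘μ} + e_μ)`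
is algebraic. -/
theorem kmu_algebraic {S : Type*} [Fintype S] [DecidableEq S] (p : ℕ) (hp : 2 ≤ p)
    (Frob : Equiv.Perm S) (k : S → ℤ) (hpos : ∀ τ : S, 0 < k τ)
    (M : Finset S) (hM : ∀ τ : S, τ ∈ M ↔ MPred Frob k τ)
    (μ : S) (hμ : MtPred Frob k μ)
    (kmu : S → ℤ)
    (hkmu : kmu = k + ∑ τ ∈ M.erase μ, kHa p Frob τ
        + ((p : ℤ) • Pi.single (Frob.symm μ) (1 : ℤ) + Pi.single μ (1 : ℤ))) :
    ∀ τ : S, 2 ≤ kmu τ := by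
  intro τ
  have hp' : (2 : ℤ) ≤ (p : ℤ) := by exact_mod_cast hp
  have hpos' := hpos τ
  -- compute kmu τ explicitly
  have key : kmu τ = k τ
      + ((if Frob τ ∈ M.erase μ then (p : ℤ) else 0)
        - (if τ ∈ M.erase μ then (1 : ℤ) else 0))
      + ((if Frob τ = μ then (p : ℤ) else 0) + (if τ = μ then (1 : ℤ) else 0)) := by
    rw [hkmu]
    simp only [Pi.add_apply, Finset.sum_apply, kHa, Pi.sub_apply, Pi.smul_apply,
      Pi.single_apply, smul_eq_mul, mul_ite, mul_one, mul_zero]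
    have e1 : ∀ σ : S, (τ = Frob.symm σ) = (Frob τ = σ) := by
      intro σ; rw [eq_iff_iff, Equiv.eq_symm_apply]
    have e2 : (τ = Frob.symm μ) = (Frob τ = μ) := e1 μ
    simp only [e1, e2, Finset.sum_sub_distrib, Finset.sum_ite_eq]
  rw [key]
  by_cases hFM : Frob τ ∈ M
  · -- then the p-term from the sum or from μ is present
    by_cases hFμ : Frob τ = μ
    · simp only [hFμ, if_true]
      have : (if τ ∈ M.erase μ then (1:ℤ) else 0) ≤ 1 := by split <;> omega
      split <;> omega
    · have : Frob τ ∈ M.erase μ := Finset.mem_erase.mpr ⟨hFμ, hFM⟩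
      simp only [this, if_true, hFμ, if_false]
      have h1 : (if τ ∈ M.erase μ then (1:ℤ) else 0) ≤ 1 := by split <;> omega
      have h2 : (0:ℤ) ≤ (if τ = μ then (1:ℤ) else 0) := by split <;> omega
      omega
  · -- Frob τ ∉ M: positivity constraints on k τ
    have hFμ : Frob τ ≠ μ := by
      intro h
      apply hFM
      rcases hμ with ⟨_, hMμ⟩ | ⟨h2, h1', _⟩
      · exact (hM _).mpr (h ▸ hMμ)
      · apply (hM _).mpr
        refine h ▸ ⟨1, le_refl 1, fun j hj1 hj2 => by omega, by simpa using h1'⟩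
    have h2 : 2 ≤ k τ := by
      by_contra h
      have hk1 : k τ = 1 := by omega
      exact hFM ((hM _).mpr (MPred_step Frob k τ (Or.inl hk1)))
    have hFMe : Frob τ ∉ M.erase μ := fun h => hFM (Finset.mem_erase.mp h).2
    simp only [hFMe, if_false, hFμ]
    by_cases hτM : τ ∈ M.erase μ
    · have h3 : 3 ≤ k τ := by
        by_contra h
        have hk2 : k τ = 2 := by omega
        exact hFM ((hM _).mpr (MPred_step Frob k τ
          (Or.inr ⟨hk2, (hM _).mp (Finset.mem_erase.mp hτM).2⟩)))
      simp only [hτM, if_true]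
      have : (0:ℤ) ≤ (if τ = μ then (1:ℤ) else 0) := by split <;> omega
      omega
    · simp only [hτM, if_false]
      have : (0:ℤ) ≤ (if τ = μ then (1:ℤ) else 0) := by split <;> omega
      omega
end

section
/- (k' lies in the minimal cone when p ≥ 3.) Let p ≥ 3, Σ a finite set with bijection Frob, k ∈ ℤ^Σ with k_τ > 0 for all τ and k ∈ Ξ_min. With M and k' = k + Σ_{τ∈M} k_{Ha_τ} as defined, k' ∈ Ξ_min, i.e. p·k'_τ ≥ k'_{Frob⁻¹∘τ} for all τ ∈ Σ. -/
lemma mpred_symm_le {S : Type*} (Frob : Equiv.Perm S) (k : S → ℤ) (τ : S)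
    (h : MPred Frob k τ) : k (Frob.symm τ) ≤ 2 := by
  obtain ⟨s, hs1, hj, hs⟩ := h
  rcases eq_or_lt_of_le hs1 with h1 | h1
  · rw [← h1] at hs; simp at hs; omega
  · have := hj 1 le_rfl h1
    simpa using this.le

lemma mpred_shift {S : Type*} (Frob : Equiv.Perm S) (k : S → ℤ) (τ : S)
    (h : MPred Frob k τ) (hpos : 0 < k τ) (hk2 : k τ ≤ 2) : MPred Frob k (Frob τ) := by
  have key : ∀ n : ℕ, (⇑Frob.symm)^[n + 1] (Frob τ) = (⇑Frob.symm)^[n] τ := by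
    intro n
    rw [Function.iterate_succ_apply]
    simp
  have h12 : k τ = 1 ∨ k τ = 2 := by omega
  rcases h12 with h1 | h2
  · exact ⟨1, le_rfl, fun j hj1 hj2 => by omega, by simpa [key 0] using h1⟩
  · obtain ⟨s, hs1, hj, hs⟩ := h
    refine ⟨s + 1, by omega, fun j hj1 hj2 => ?_, by rw [key s]; exact hs⟩
    rcases Nat.eq_or_lt_of_le hj1 with h1 | h1
    · rw [← h1]; simpa [key 0] using h2
    · obtain ⟨m, rfl⟩ : ∃ m, j = m + 1 := ⟨j - 1, by omega⟩
      rw [key m]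
      exact hj m (by omega) (by omega)

lemma kprime_apply {S : Type*} [Fintype S] [DecidableEq S] (p : ℕ)
    (Frob : Equiv.Perm S) (k : S → ℤ) (M : Finset S) (σ : S) :
    (k + ∑ τ ∈ M, kHa p Frob τ) σ =
      k σ + (p : ℤ) * (if Frob σ ∈ M then 1 else 0) - (if σ ∈ M then 1 else 0) := by
  simp only [Pi.add_apply, Finset.sum_apply, kHa, Pi.sub_apply, Pi.smul_apply,
    Pi.single_apply, smul_eq_mul, mul_ite, mul_one, mul_zero]
  rw [Finset.sum_sub_distrib, Finset.sum_ite_eq M σ (fun _ => (1 : ℤ))]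
  have : ∀ τ ∈ M, (if σ = Frob.symm τ then (p : ℤ) else 0) =
      (if Frob σ = τ then (p : ℤ) else 0) := by
    intro τ _
    congr 1
    simp [Equiv.eq_symm_apply, eq_comm]
  rw [Finset.sum_congr rfl this, Finset.sum_ite_eq M (Frob σ) (fun _ => (p : ℤ))]
  ring

/-- For `p ≥ 3`, the weight `k' = k + ∑_{τ ∈ M} k_{Ha_τ}` lies in the minimal cone. -/
theorem kprime_in_XiMin {S : Type*} [Fintype S] [DecidableEq S] (p : ℕ) (hp : 3 ≤ p)
    (Frob : Equiv.Perm S) (k : S → ℤ) (hpos : ∀ τ : S, 0 < k τ)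
    (hmin : ∀ τ : S, k (Frob.symm τ) ≤ (p : ℤ) * k τ)
    (M : Finset S) (hM : ∀ τ : S, τ ∈ M ↔ MPred Frob k τ)
    (k' : S → ℤ) (hk' : k' = k + ∑ τ ∈ M, kHa p Frob τ) :
    ∀ τ : S, k' (Frob.symm τ) ≤ (p : ℤ) * k' τ := by
  intro τ
  subst hk'
  rw [kprime_apply, kprime_apply]
  rw [Equiv.apply_symm_apply]
  have hp3 : (3 : ℤ) ≤ (p : ℤ) := by exact_mod_cast hp
  by_cases hτ : τ ∈ M
  · have hle2 : k (Frob.symm τ) ≤ 2 := mpred_symm_le Frob k τ ((hM τ).1 hτ)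
    by_cases hFτ : Frob τ ∈ M
    · simp only [hτ, hFτ, if_pos, if_true]
      have h1 := hmin τ
      have h2 : (0:ℤ) ≤ (p:ℤ) * ((p:ℤ) - 3) := mul_nonneg (by linarith) (by linarith)
      by_cases hsτ : Frob.symm τ ∈ M <;>
        simp only [hsτ, if_pos, if_neg, if_true, if_false] <;> nlinarith [hpos τ]
    · have hk3 : 3 ≤ k τ := by
        by_contra hc
        exact hFτ ((hM (Frob τ)).2 (mpred_shift Frob k τ ((hM τ).1 hτ) (hpos τ) (by omega)))
      simp only [hτ, hFτ, if_pos, if_neg, if_true, if_false]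
      by_cases hsτ : Frob.symm τ ∈ M <;> simp only [hsτ, if_pos, if_neg, if_true, if_false] <;>
        nlinarith [mul_nonneg (by linarith : (0:ℤ) ≤ (p:ℤ)) (by linarith : (0:ℤ) ≤ k τ - 3)]
  · have := hmin τ
    by_cases hFτ : Frob τ ∈ M <;> by_cases hsτ : Frob.symm τ ∈ M <;>
      simp only [hτ, hFτ, hsτ, if_pos, if_neg, if_true, if_false] <;>
      nlinarith [hpos τ, mul_nonneg (by linarith : (0:ℤ) ≤ (p:ℤ)) (by linarith : (0:ℤ) ≤ (p:ℤ) - 3)]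
end
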